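/- Let A, B, C be linearly independent vectors in ℝ³ (vertices of a spherical triangle). The poles of the three altitudes, namely (A×B)×C, (B×C)×A, and (C×A)×B, are linearly dependent (span a space of dimension at most 2); hence the three altitude great circles of a spherical triangle have a common point. -/

import Mathlib

open Matrix RealInnerProductSpace

lemma poles_sum_zero (A B C : Fin 3 → ℝ) :
    crossProduct (crossProduct A B) C + crossProduct (crossProduct B C) A +
      crossProduct (crossProduct C A) B = 0 := by
  have := jacobi_cross A B C
  have h1 : crossProduct (crossProduct A B) C = -(crossProduct C (crossProduct A B)) := by
    rw [cross_anticomm]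
  have h2 : crossProduct (crossProduct B C) A = -(crossProduct A (crossProduct B C)) := by
    rw [cross_anticomm]
  have h3 : crossProduct (crossProduct C A) B = -(crossProduct B (crossProduct C A)) := by
    rw [cross_anticomm]
  rw [h1, h2, h3]
  linear_combination -this

/-- The poles `(A×B)×C`, `(B×C)×A`, `(C×A)×B` of the three altitudes of a spherical
triangle with linearly independent vertices `A`, `B`, `C` are linearly dependent;
hence there is a point of the unit sphere lying on all three altitude great circles
(a unit vector orthogonal to all three poles). -/
theorem spherical_altitudes_concurrent (A B C : Fin 3 → ℝ)
    (h : LinearIndependent ℝ ![A, B, C]) :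
    ¬ LinearIndependent ℝ
        ![crossProduct (crossProduct A B) C, crossProduct (crossProduct B C) A,
          crossProduct (crossProduct C A) B] ∧
    ∃ P : EuclideanSpace ℝ (Fin 3), ‖P‖ = 1 ∧
      ⟪P, (WithLp.toLp 2 (crossProduct (crossProduct A B) C) : EuclideanSpace ℝ (Fin 3))⟫ = 0 ∧
      ⟪P, (WithLp.toLp 2 (crossProduct (crossProduct B C) A) : EuclideanSpace ℝ (Fin 3))⟫ = 0 ∧
      ⟪P, (WithLp.toLp 2 (crossProduct (crossProduct C A) B) : EuclideanSpace ℝ (Fin 3))⟫ = 0 := by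
  set u := (crossProduct (crossProduct A B) C : Fin 3 → ℝ) with hu
  set v := (crossProduct (crossProduct B C) A : Fin 3 → ℝ) with hv
  set w := (crossProduct (crossProduct C A) B : Fin 3 → ℝ) with hw
  have hsum : u + v + w = 0 := poles_sum_zero A B C
  constructor
  · intro hli
    rw [Fintype.linearIndependent_iff] at hli
    have := hli (fun _ => 1) (by
      simp [Fin.sum_univ_three]
      linear_combination hsum) 0
    simp at this
  · -- find a unit vector orthogonal to span {u, v}; w = -(u+v)
    let u' : EuclideanSpace ℝ (Fin 3) := WithLp.toLp 2 u
    let v' : EuclideanSpace ℝ (Fin 3) := WithLp.toLp 2 v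
    let S : Submodule ℝ (EuclideanSpace ℝ (Fin 3)) := Submodule.span ℝ {u', v'}
    have hrank : Module.finrank ℝ S ≤ 2 := by
      classical
      haveI : Fintype ({u', v'} : Set (EuclideanSpace ℝ (Fin 3))) :=
        Set.Finite.fintype (Set.toFinite _)
      calc Module.finrank ℝ S ≤ ({u', v'} : Set (EuclideanSpace ℝ (Fin 3))).toFinset.card :=
            finrank_span_le_card (R := ℝ) ({u', v'} : Set _)
        _ ≤ 2 := by
            rw [Set.toFinset_insert, Set.toFinset_singleton]
            exact (Finset.card_insert_le _ _).trans (by simp)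
    have horth : Sᗮ ≠ ⊥ := by
      intro hbot
      have := Submodule.finrank_add_finrank_orthogonal (K := S)
      rw [hbot] at this
      simp [finrank_euclideanSpace] at this
      omega
    obtain ⟨x, hxS, hx0⟩ := Submodule.exists_mem_ne_zero_of_ne_bot horth
    refine ⟨‖x‖⁻¹ • x, ?_, ?_, ?_, ?_⟩
    · simp [norm_smul, abs_of_nonneg, inv_mul_cancel₀ (norm_ne_zero_iff.mpr hx0)]
    · have : ⟪x, u'⟫ = 0 := by
        rw [real_inner_comm]
        exact hxS u' (Submodule.subset_span (by simp))
      simp only [inner_smul_left]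
      simp [u'] at this
      simp [this]
    · have : ⟪x, v'⟫ = 0 := by
        rw [real_inner_comm]
        exact hxS v' (Submodule.subset_span (by simp))
      simp only [inner_smul_left]
      simp [v'] at this
      simp [this]
    · have hwuv0 : w = -(u + v) := by
        have huvw : (u + v) + w = 0 := by rw [← hsum]
        exact eq_neg_of_add_eq_zero_right huvw
      have hwuv : (WithLp.toLp 2 w : EuclideanSpace ℝ (Fin 3)) = -(u' + v') := by
        rw [hwuv0]; simp [u', v']
      have h1 : ⟪x, u'⟫ = 0 := by
        rw [real_inner_comm]; exact hxS u' (Submodule.subset_span (by simp))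
      have h2 : ⟪x, v'⟫ = 0 := by
        rw [real_inner_comm]; exact hxS v' (Submodule.subset_span (by simp))
      rw [hwuv]
      simp only [inner_smul_left, inner_neg_right, inner_add_right, h1, h2]
      simp
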